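/- arXiv:2306.13890 — 2 statements merged into one kernel-verified Lean document; each statement's English description precedes it below -/
import Mathlib

section
/- Let v and u be unit vectors in the Euclidean plane ℝ². Then the infimum, over all a ∈ ℝ² with a ≠ 0, of the quantity (⟪a,v⟫² + ⟪a,u⟫²)/‖a‖² equals 1 − |⟪v,u⟫|. -/
open scoped RealInnerProductSpace

private lemma inner_two (x y : EuclideanSpace ℝ (Fin 2)) :
    ⟪x, y⟫ = x 0 * y 0 + x 1 * y 1 := by
  simp [PiLp.inner_apply, Fin.sum_univ_two]; ring

private lemma norm_sq_two (x : EuclideanSpace ℝ (Fin 2)) :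
    ‖x‖ ^ 2 = x 0 ^ 2 + x 1 ^ 2 := by
  rw [← real_inner_self_eq_norm_sq, inner_two]; ring

/-- Transformation-stability identity in the Euclidean plane: for unit vectors `v, u`,
the infimum over `a ≠ 0` of `(⟪a,v⟫² + ⟪a,u⟫²)/‖a‖²` equals `1 − |⟪v,u⟫|`. -/
theorem stmt_3 (v u : EuclideanSpace ℝ (Fin 2)) (hv : ‖v‖ = 1) (hu : ‖u‖ = 1) :
    sInf {r : ℝ | ∃ a : EuclideanSpace ℝ (Fin 2), a ≠ 0 ∧
        r = (⟪a, v⟫ ^ 2 + ⟪a, u⟫ ^ 2) / ‖a‖ ^ 2} = 1 - |⟪v, u⟫| := by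
  set c : ℝ := ⟪v, u⟫ with hc
  have hv2 : v 0 ^ 2 + v 1 ^ 2 = 1 := by rw [← norm_sq_two, hv]; norm_num
  have hu2 : u 0 ^ 2 + u 1 ^ 2 = 1 := by rw [← norm_sq_two, hu]; norm_num
  have hcc : c = v 0 * u 0 + v 1 * u 1 := inner_two v u
  have hcle : |c| ≤ 1 := by
    calc |c| ≤ ‖v‖ * ‖u‖ := abs_real_inner_le_norm v u
    _ = 1 := by rw [hv, hu]; ring
  -- the key 2D identity
  have key : ∀ a : EuclideanSpace ℝ (Fin 2),
      ⟪a, v⟫ ^ 2 + ⟪a, u⟫ ^ 2 - 2 * c * (⟪a, v⟫ * ⟪a, u⟫) = (1 - c ^ 2) * ‖a‖ ^ 2 := by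
    intro a
    rw [inner_two, inner_two, norm_sq_two, hcc]
    linear_combination (a 1 ^ 2 - 2 * u 1 ^ 2 * a 1 ^ 2 - 2 * u 0 * u 1 * a 0 * a 1 -
        u 0 ^ 2 * a 1 ^ 2 - u 0 ^ 2 * a 0 ^ 2 +
        (a 0 ^ 2 + a 1 ^ 2) * (u 0 ^ 2 + u 1 ^ 2)) * hv2 +
      (-(a 1 ^ 2) - 2 * v 0 * v 1 * a 0 * a 1 + v 0 ^ 2 * a 1 ^ 2 - v 0 ^ 2 * a 0 ^ 2 +
        (a 0 ^ 2 + a 1 ^ 2)) * hu2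
  -- membership: the value 1 - |c| is attained
  have hmem : (1 - |c|) ∈ {r : ℝ | ∃ a : EuclideanSpace ℝ (Fin 2), a ≠ 0 ∧
      r = (⟪a, v⟫ ^ 2 + ⟪a, u⟫ ^ 2) / ‖a‖ ^ 2} := by
    rcases lt_or_eq_of_le hcle with hlt | heq
    · rcases le_or_gt 0 c with hc0 | hc0
      · refine ⟨v - u, ?_, ?_⟩
        · intro h
          have : ‖v - u‖ ^ 2 = 0 := by rw [h, norm_zero]; ring
          rw [norm_sub_sq_real, hv, hu, ← hc] at this
          have : c = 1 := by nlinarith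
          rw [abs_of_nonneg hc0] at hlt; linarith
        · have h1 : ⟪v - u, v⟫ = 1 - c := by
            rw [inner_sub_left, real_inner_self_eq_norm_sq, hv, real_inner_comm, ← hc]; ring
          have h2 : ⟪v - u, u⟫ = c - 1 := by
            rw [inner_sub_left, real_inner_self_eq_norm_sq, hu, ← hc]; ring
          have h3 : ‖v - u‖ ^ 2 = 2 - 2 * c := by
            rw [norm_sub_sq_real, hv, hu, ← hc]; ring
          have hcne : c ≠ 1 := by rw [abs_of_nonneg hc0] at hlt; linarith
          have hne : (2 : ℝ) - 2 * c ≠ 0 := fun h => hcne (by linarith)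
          rw [h1, h2, h3, abs_of_nonneg hc0, eq_div_iff hne]
          ring
      · refine ⟨v + u, ?_, ?_⟩
        · intro h
          have : ‖v + u‖ ^ 2 = 0 := by rw [h, norm_zero]; ring
          rw [norm_add_sq_real, hv, hu, ← hc] at this
          have : c = -1 := by nlinarith
          rw [abs_of_neg hc0] at hlt; linarith
        · have h1 : ⟪v + u, v⟫ = 1 + c := by
            rw [inner_add_left, real_inner_self_eq_norm_sq, hv, real_inner_comm, ← hc]; ring
          have h2 : ⟪v + u, u⟫ = c + 1 := by
            rw [inner_add_left, real_inner_self_eq_norm_sq, hu, ← hc]; ring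
          have h3 : ‖v + u‖ ^ 2 = 2 + 2 * c := by
            rw [norm_add_sq_real, hv, hu, ← hc]; ring
          have hcne : c ≠ -1 := by rw [abs_of_neg hc0] at hlt; linarith
          have hne : (2 : ℝ) + 2 * c ≠ 0 := by
            intro h; apply hcne; linarith
          rw [h1, h2, h3, abs_of_neg hc0, eq_div_iff hne]
          ring
      -- |c| = 1 : u = ± v, take a ⟂ v
    · set a : EuclideanSpace ℝ (Fin 2) := (EuclideanSpace.equiv (Fin 2) ℝ).symm ![-(v 1), v 0] with ha
      have ha0 : a 0 = -(v 1) := rfl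
      have ha1 : a 1 = v 0 := rfl
      have hD : v 0 * u 1 - v 1 * u 0 = 0 := by
        have hcsq : c ^ 2 = 1 := by
          rw [← sq_abs, heq]; norm_num
        have h1 : (v 0 * u 1 - v 1 * u 0) ^ 2 =
            (v 0 ^ 2 + v 1 ^ 2) * (u 0 ^ 2 + u 1 ^ 2) - (v 0 * u 0 + v 1 * u 1) ^ 2 := by ring
        have h2 : (v 0 * u 1 - v 1 * u 0) ^ 2 = 0 := by
          rw [h1, hv2, hu2, ← hcc, hcsq]; ring
        exact pow_eq_zero_iff (by norm_num) |>.mp h2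
      refine ⟨a, ?_, ?_⟩
      · intro h
        have hn : ‖a‖ ^ 2 = 0 := by rw [h]; simp
        rw [norm_sq_two, ha0, ha1] at hn
        have : v 0 ^ 2 + v 1 ^ 2 = 0 := by nlinarith
        rw [hv2] at this; norm_num at this
      · have h1 : ⟪a, v⟫ = 0 := by rw [inner_two, ha0, ha1]; ring
        have h2 : ⟪a, u⟫ = 0 := by rw [inner_two, ha0, ha1]; linarith [hD]
        rw [h1, h2, ← heq]
        norm_num
  -- lower bound
  have hlb : ∀ r ∈ {r : ℝ | ∃ a : EuclideanSpace ℝ (Fin 2), a ≠ 0 ∧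
      r = (⟪a, v⟫ ^ 2 + ⟪a, u⟫ ^ 2) / ‖a‖ ^ 2}, 1 - |c| ≤ r := by
    rintro r ⟨a, ha, rfl⟩
    have hn : 0 < ‖a‖ ^ 2 := pow_pos (norm_pos_iff.mpr ha) 2
    rw [le_div_iff₀ hn]
    have hkey := key a
    set x := ⟪a, v⟫
    set y := ⟪a, u⟫
    rcases le_or_gt 0 c with hc0 | hc0
    · rw [abs_of_nonneg hc0]
      nlinarith [mul_nonneg hc0 (sq_nonneg (x + y)), hn, hcle, abs_of_nonneg hc0]
    · rw [abs_of_neg hc0]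
      nlinarith [mul_nonneg (neg_nonneg.mpr hc0.le) (sq_nonneg (x - y)), hn, hcle,
        abs_of_neg hc0]
  exact le_antisymm (csInf_le ⟨1 - |c|, fun r hr => hlb r hr⟩ hmem) (le_csInf ⟨_, hmem⟩ hlb)
end

section
/- Let K ⊆ ℝ² be a measurable set, v : ℝ² → ℝ twice continuously differentiable, and t₁, t₂ unit vectors in ℝ² with |⟪t₁,t₂⟫| < 1. For i = 1,2 define fᵢ(x) := (Dv(x))(tᵢ), the directional derivative of v along tᵢ. Let C_PF > 0 and h > 0, and assume the Poincaré–Friedrichs bounds ∫_K fᵢ(x)² dx ≤ C_PF² h² ∫_K ‖D fᵢ(x)‖² dx for i = 1,2, where Dfᵢ(x) is the (Fréchet) derivative of fᵢ at x. Then ∫_K ‖Dv(x)‖² dx ≤ (2 C_PF² / (1 − |⟪t₁,t₂⟫|)) · h² · ∫_K ‖D²v(x)‖² dx, where D²v(x) denotes the second derivative of v at x with its operator norm, and all integrals are Lebesgue integrals over K with values in [0,∞]. -/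
open MeasureTheory
open scoped RealInnerProductSpace ENNReal

local notation "E2" => EuclideanSpace ℝ (Fin 2)


lemma key_scalar (c u q w s : ℝ) (hc : |c| < 1) (hs : 0 < s) (hs2 : s ^ 2 = 1 - c ^ 2)
    (hw : w = c * u + s * q) : (1 - |c|) * (u ^ 2 + q ^ 2) ≤ u ^ 2 + w ^ 2 := by
  rcases abs_cases c with ⟨h1, h2⟩ | ⟨h1, h2⟩ <;> rw [h1] at hc ⊢ <;> subst hw <;>
    nlinarith [sq_nonneg (s * u + (1 - c) * q), sq_nonneg (s * u - (1 + c) * q),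
      sq_nonneg (s * u + (1 + c) * q), sq_nonneg (s * u - (1 - c) * q), sq_nonneg s,
      mul_pos hs hs]

lemma key_fun (t₁ t₂ : E2) (ht₁ : ‖t₁‖ = 1) (ht₂ : ‖t₂‖ = 1)
    (ht : |⟪t₁, t₂⟫| < 1) (L : E2 →L[ℝ] ℝ) :
    (1 - |⟪t₁, t₂⟫|) * ‖L‖ ^ 2 ≤ (L t₁) ^ 2 + (L t₂) ^ 2 := by
  set c := ⟪t₁, t₂⟫ with hc
  have hc1 : c ^ 2 < 1 := by
    have h := abs_lt.mp ht
    nlinarith [h.1, h.2]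
  set s : ℝ := Real.sqrt (1 - c ^ 2) with hsdef
  have hs : 0 < s := Real.sqrt_pos.2 (by linarith)
  have hs2 : s ^ 2 = 1 - c ^ 2 := Real.sq_sqrt (by linarith)
  set g : E2 := (InnerProductSpace.toDual ℝ E2).symm L with hgdef
  have hgL : ∀ x, ⟪g, x⟫ = L x := fun x => InnerProductSpace.toDual_symm_apply
  have hgn : ‖g‖ = ‖L‖ := (InnerProductSpace.toDual ℝ E2).symm.norm_map L
  set e : E2 := s⁻¹ • (t₂ - c • t₁) with hedef
  have ht₁' : ⟪t₁, t₁⟫ = 1 := by rw [real_inner_self_eq_norm_sq, ht₁]; norm_num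
  have ht₂' : ⟪t₂, t₂⟫ = 1 := by rw [real_inner_self_eq_norm_sq, ht₂]; norm_num
  have hsym : ⟪t₂, t₁⟫ = c := by rw [real_inner_comm]
  have h12 : ⟪t₁, e⟫ = 0 := by
    simp [hedef, inner_smul_right, inner_sub_right, inner_smul_right, ht₁', hsym, ← hc, ht₁]
  have hee : ⟪e, e⟫ = 1 := by
    simp only [hedef, inner_smul_left, inner_smul_right, inner_sub_left, inner_sub_right,
      RCLike.conj_to_real, ht₁', ht₂', hsym, ← hc]
    have : ⟪t₁, t₂⟫ = c := rfl
    field_simp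
    nlinarith [hs2]
  have hne : ‖e‖ = 1 := by
    rw [← Real.sqrt_one, ← hee, real_inner_self_eq_norm_sq]
    simp
  have hon : Orthonormal ℝ ![t₁, e] := by
    rw [orthonormal_iff_ite]
    intro i j
    fin_cases i <;> fin_cases j
    · simp only [Matrix.cons_val_zero]; rw [if_pos trivial]; exact ht₁'
    · simp only [Matrix.cons_val_zero, Matrix.cons_val_one, Matrix.head_cons]
      rw [if_neg (by decide)]; exact h12
    · simp only [Matrix.cons_val_zero, Matrix.cons_val_one, Matrix.head_cons]
      rw [if_neg (by decide), real_inner_comm]; exact h12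
    · simp only [Matrix.cons_val_one, Matrix.head_cons]; rw [if_pos trivial]; exact hee
  have hcard : Fintype.card (Fin 2) = Module.finrank ℝ E2 := by simp
  let b := basisOfOrthonormalOfCardEqFinrank hon hcard
  have hb : ⇑b = ![t₁, e] := coe_basisOfOrthonormalOfCardEqFinrank hon hcard
  have hon' : Orthonormal ℝ ⇑b := by rw [hb]; exact hon
  let B := b.toOrthonormalBasis hon'
  have hB : ⇑B = ![t₁, e] := by
    rw [Module.Basis.coe_toOrthonormalBasis, hb]
  have hnorm : ‖g‖ ^ 2 = ⟪t₁, g⟫ ^ 2 + ⟪e, g⟫ ^ 2 := by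
    have := B.sum_inner_mul_inner g g
    rw [real_inner_self_eq_norm_sq] at this
    rw [← this, Fin.sum_univ_two, hB]
    simp [real_inner_comm g, sq]
  have hu : ⟪t₁, g⟫ = L t₁ := by rw [real_inner_comm]; exact hgL t₁
  have hw2 : ⟪t₂, g⟫ = L t₂ := by rw [real_inner_comm]; exact hgL t₂
  have heg : ⟪e, g⟫ = s⁻¹ * (L t₂ - c * L t₁) := by
    rw [hedef]
    rw [real_inner_smul_left, inner_sub_left, real_inner_smul_left, hu, hw2]
  have hweq : L t₂ = c * L t₁ + s * ⟪e, g⟫ := by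
    rw [heg]; field_simp; ring
  calc (1 - |c|) * ‖L‖ ^ 2 = (1 - |c|) * ((L t₁) ^ 2 + ⟪e, g⟫ ^ 2) := by
        rw [← hgn, hnorm, hu]
    _ ≤ (L t₁) ^ 2 + (L t₂) ^ 2 := key_scalar c (L t₁) ⟪e, g⟫ (L t₂) s ht hs hs2 hweq


lemma dfbound (v : E2 → ℝ) (hv : ContDiff ℝ 2 v) (t : E2) (htn : ‖t‖ = 1) (x : E2) :
    ‖fderiv ℝ (fun y => fderiv ℝ v y t) x‖ ≤ ‖iteratedFDeriv ℝ 2 v x‖ := by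
  have hdv : DifferentiableAt ℝ (fderiv ℝ v) x :=
    (((hv.fderiv_right (m := 1) (by norm_num)).differentiable one_ne_zero) x)
  have h1 : fderiv ℝ (fun y => fderiv ℝ v y t) x =
      (ContinuousLinearMap.apply ℝ ℝ t).comp (fderiv ℝ (fderiv ℝ v) x) :=
    ((ContinuousLinearMap.apply ℝ ℝ t).hasFDerivAt.comp x hdv.hasFDerivAt).fderiv
  have ha : ‖ContinuousLinearMap.apply ℝ ℝ t‖ ≤ 1 :=
    ContinuousLinearMap.opNorm_le_bound _ zero_le_one
      (fun L => by simpa [htn] using L.le_opNorm t)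
  have h2 : ‖fderiv ℝ (fderiv ℝ v) x‖ = ‖iteratedFDeriv ℝ 2 v x‖ := by
    rw [← norm_iteratedFDeriv_fderiv (n := 1), ← norm_iteratedFDeriv_fderiv (n := 0),
      norm_iteratedFDeriv_zero]
  calc ‖fderiv ℝ (fun y => fderiv ℝ v y t) x‖
      ≤ ‖ContinuousLinearMap.apply ℝ ℝ t‖ * ‖fderiv ℝ (fderiv ℝ v) x‖ := by
        rw [h1]; exact ContinuousLinearMap.opNorm_comp_le _ _
    _ ≤ 1 * ‖iteratedFDeriv ℝ 2 v x‖ := by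
        rw [h2]; exact mul_le_mul_of_nonneg_right ha (norm_nonneg _)
    _ = ‖iteratedFDeriv ℝ 2 v x‖ := one_mul _

/-- Quantitative core of the Poincaré-type inequality (Lemma 6.3): if the directional
derivatives `fᵢ = Dv(·)(tᵢ)` along two unit directions `t₁, t₂` with `|⟪t₁,t₂⟫| < 1`
satisfy Poincaré–Friedrichs bounds `∫_K fᵢ² ≤ C_PF² h² ∫_K ‖Dfᵢ‖²`, then
`∫_K ‖Dv‖² ≤ (2 C_PF²/(1 − |⟪t₁,t₂⟫|)) h² ∫_K ‖D²v‖²`. -/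
theorem stmt_6 (K : Set (EuclideanSpace ℝ (Fin 2))) (hK : MeasurableSet K)
    (v : EuclideanSpace ℝ (Fin 2) → ℝ) (hv : ContDiff ℝ 2 v)
    (t₁ t₂ : EuclideanSpace ℝ (Fin 2)) (ht₁ : ‖t₁‖ = 1) (ht₂ : ‖t₂‖ = 1)
    (ht : |⟪t₁, t₂⟫| < 1)
    (C_PF h : ℝ) (hCPF : 0 < C_PF) (hh : 0 < h)
    (hPF₁ : ∫⁻ x in K, ENNReal.ofReal ((fderiv ℝ v x t₁) ^ 2) ≤
      ENNReal.ofReal (C_PF ^ 2 * h ^ 2) *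
        ∫⁻ x in K, ENNReal.ofReal (‖fderiv ℝ (fun y => fderiv ℝ v y t₁) x‖ ^ 2))
    (hPF₂ : ∫⁻ x in K, ENNReal.ofReal ((fderiv ℝ v x t₂) ^ 2) ≤
      ENNReal.ofReal (C_PF ^ 2 * h ^ 2) *
        ∫⁻ x in K, ENNReal.ofReal (‖fderiv ℝ (fun y => fderiv ℝ v y t₂) x‖ ^ 2)) :
    ∫⁻ x in K, ENNReal.ofReal (‖fderiv ℝ v x‖ ^ 2) ≤
      ENNReal.ofReal (2 * C_PF ^ 2 / (1 - |⟪t₁, t₂⟫|) * h ^ 2) *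
        ∫⁻ x in K, ENNReal.ofReal (‖iteratedFDeriv ℝ 2 v x‖ ^ 2) := by
  set a : ℝ := |⟪t₁, t₂⟫| with ha
  have ha0 : 0 ≤ a := abs_nonneg _
  have ha1 : 0 < 1 - a := by linarith
  have hinv : (0:ℝ) ≤ (1 - a)⁻¹ := inv_nonneg.2 ha1.le
  have hCh : (0:ℝ) ≤ C_PF ^ 2 * h ^ 2 := by positivity
  -- continuity / measurability
  have cont1 : Continuous (fderiv ℝ v) := hv.continuous_fderiv (by norm_num)
  have contf : ∀ t : E2, Continuous (fun x => fderiv ℝ v x t) := fun t =>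
    (ContinuousLinearMap.apply ℝ ℝ t).continuous.comp cont1
  have meas : ∀ t : E2,
      Measurable (fun x => ENNReal.ofReal ((fderiv ℝ v x t) ^ 2)) := fun t =>
    (ENNReal.continuous_ofReal.comp ((contf t).pow 2)).measurable
  set I₂ := ∫⁻ x in K, ENNReal.ofReal (‖iteratedFDeriv ℝ 2 v x‖ ^ 2) with hI₂
  set J₁ := ∫⁻ x in K, ENNReal.ofReal (‖fderiv ℝ (fun y => fderiv ℝ v y t₁) x‖ ^ 2) with hJ₁
  set J₂ := ∫⁻ x in K, ENNReal.ofReal (‖fderiv ℝ (fun y => fderiv ℝ v y t₂) x‖ ^ 2) with hJ₂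
  have hJ₁I : J₁ ≤ I₂ := by
    refine lintegral_mono fun x => ENNReal.ofReal_le_ofReal ?_
    exact pow_le_pow_left₀ (norm_nonneg _) (dfbound v hv t₁ ht₁ x) 2
  have hJ₂I : J₂ ≤ I₂ := by
    refine lintegral_mono fun x => ENNReal.ofReal_le_ofReal ?_
    exact pow_le_pow_left₀ (norm_nonneg _) (dfbound v hv t₂ ht₂ x) 2
  calc ∫⁻ x in K, ENNReal.ofReal (‖fderiv ℝ v x‖ ^ 2)
      ≤ ∫⁻ x in K, ENNReal.ofReal ((1 - a)⁻¹ *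
          ((fderiv ℝ v x t₁) ^ 2 + (fderiv ℝ v x t₂) ^ 2)) := by
        refine lintegral_mono fun x => ENNReal.ofReal_le_ofReal ?_
        have hk := key_fun t₁ t₂ ht₁ ht₂ ht (fderiv ℝ v x)
        rw [← ha] at hk
        calc ‖fderiv ℝ v x‖ ^ 2 = (1 - a)⁻¹ * ((1 - a) * ‖fderiv ℝ v x‖ ^ 2) := by
              field_simp
          _ ≤ (1 - a)⁻¹ * ((fderiv ℝ v x t₁) ^ 2 + (fderiv ℝ v x t₂) ^ 2) :=
              mul_le_mul_of_nonneg_left hk hinv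
    _ = ENNReal.ofReal ((1 - a)⁻¹) * ((∫⁻ x in K, ENNReal.ofReal ((fderiv ℝ v x t₁) ^ 2)) +
          ∫⁻ x in K, ENNReal.ofReal ((fderiv ℝ v x t₂) ^ 2)) := by
        rw [← lintegral_add_left (meas t₁),
          ← lintegral_const_mul' _ _ ENNReal.ofReal_ne_top]
        refine lintegral_congr fun x => ?_
        rw [← ENNReal.ofReal_add (sq_nonneg _) (sq_nonneg _), ← ENNReal.ofReal_mul hinv]
    _ ≤ ENNReal.ofReal ((1 - a)⁻¹) *
          (ENNReal.ofReal (C_PF ^ 2 * h ^ 2) * J₁ + ENNReal.ofReal (C_PF ^ 2 * h ^ 2) * J₂) :=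
        mul_le_mul_right (add_le_add hPF₁ hPF₂) _
    _ ≤ ENNReal.ofReal ((1 - a)⁻¹) *
          (ENNReal.ofReal (C_PF ^ 2 * h ^ 2) * I₂ + ENNReal.ofReal (C_PF ^ 2 * h ^ 2) * I₂) :=
        mul_le_mul_right (add_le_add (mul_le_mul_right hJ₁I _) (mul_le_mul_right hJ₂I _)) _
    _ = ENNReal.ofReal (2 * C_PF ^ 2 / (1 - a) * h ^ 2) * I₂ := by
        rw [← two_mul, ← mul_assoc, ← mul_assoc]
        congr 1
        rw [show (2 : ℝ≥0∞) = ENNReal.ofReal 2 by norm_num,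
          ← ENNReal.ofReal_mul hinv, ← ENNReal.ofReal_mul (by positivity)]
        congr 1
        field_simp
end
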